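/- A λ-term is strongly normalizing for β-reduction if and only if it is typable in the intersection type system D. -/

import Mathlib

/-- Untyped λ-terms in de Bruijn representation. -/
inductive Term : Type
  | var : ℕ → Term
  | lam : Term → Term
  | app : Term → Term → Term
  deriving DecidableEq

namespace Term

/-- Shift (lift) all de Bruijn indices ≥ d by one. -/
def lift (d : ℕ) : Term → Term
  | var n => var (if n < d then n else n + 1)
  | lam t => lam (lift (d + 1) t)
  | app t u => app (lift d t) (lift d u)

/-- Capture-avoiding substitution `t[k := u]` (de Bruijn style). -/
def subst : Term → ℕ → Term → Term
  | var n, k, u => if n = k then u else var (if n < k then n else n - 1)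
  | lam t, k, u => lam (subst t (k + 1) (lift 0 u))
  | app t v, k, u => app (subst t k u) (subst v k u)

/-- Swap the de Bruijn indices d and d+1 (exchange of two adjacent binders). -/
def swap (d : ℕ) : Term → Term
  | var n => var (if n = d then d + 1 else if n = d + 1 then d else n)
  | lam t => lam (swap (d + 1) t)
  | app t u => app (swap d t) (swap d u)

end Term

/-- The four reduction rules. -/
inductive Rule | beta | delta | gamma | assoc

/-- One-step reduction by a given rule (closed under congruence).
β: (λx.M N) ▷ M[x:=N];
δ: (λy.λx.M N) ▷ λx.(λy.M N), x ∉ FV(N);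
γ: (λx.M N P) ▷ (λx.(M P) N), x ∉ FV(P);
assoc: (M (λx.N P)) ▷ (λx.(M N) P), x ∉ FV(M).
Freshness conditions are realized by lifting. -/
inductive Step : Rule → Term → Term → Prop
  | beta (M N) : Step .beta (.app (.lam M) N) (Term.subst M 0 N)
  | delta (M N) : Step .delta (.app (.lam (.lam M)) N)
      (.lam (.app (.lam (Term.swap 0 M)) (Term.lift 0 N)))
  | gamma (M N P) : Step .gamma (.app (.app (.lam M) N) P)
      (.app (.lam (.app M (Term.lift 0 P))) N)
  | assoc (M N P) : Step .assoc (.app M (.app (.lam N) P))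
      (.app (.lam (.app (Term.lift 0 M) N)) P)
  | appCongL {r t t'} (u) : Step r t t' → Step r (.app t u) (.app t' u)
  | appCongR {r u u'} (t) : Step r u u' → Step r (.app t u) (.app t u')
  | lamCong {r t t'} : Step r t t' → Step r (.lam t) (.lam t')

/-- One-step reduction by the union of the four rules. -/
def StepAll (t t' : Term) : Prop := ∃ r, Step r t t'

/-- Strong normalization for the union of β, δ, γ, assoc. -/
def SN (t : Term) : Prop := Acc (fun a b => StepAll b a) t

/-- Strong normalization for β alone. -/
def SNbeta (t : Term) : Prop := Acc (fun a b => Step .beta b a) t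

mutual
/-- Simple types: atoms and arrows with simple codomain. -/
inductive STy : Type
  | atom : ℕ → STy
  | arrow : Ty → STy → STy
/-- Types of system D: intersections of simple types. -/
inductive Ty : Type
  | simple : STy → Ty
  | inter : STy → Ty → Ty
end

/-- Typing judgment of system D (contexts are lists of types, de Bruijn). -/
inductive Typing : List Ty → Term → Ty → Prop
  | var {Γ n A} : Γ[n]? = some A → Typing Γ (.var n) A
  | app {Γ M N A B} : Typing Γ M (.simple (.arrow A B)) → Typing Γ N A →
      Typing Γ (.app M N) (.simple B)
  | lam {Γ M A B} : Typing (A :: Γ) M (.simple B) →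
      Typing Γ (.lam M) (.simple (.arrow A B))
  | interI {Γ M A B} : Typing Γ M (.simple A) → Typing Γ M B →
      Typing Γ M (.inter A B)
  | interE1 {Γ M A B} : Typing Γ M (.inter A B) → Typing Γ M (.simple A)
  | interE2 {Γ M A B} : Typing Γ M (.inter A B) → Typing Γ M B

/-- A term is typable in system D. -/
def Typable (t : Term) : Prop := ∃ Γ A, Typing Γ t A

/-- (H M₁ ... Mₙ). -/
def appList (H : Term) (Ms : List Term) : Term := Ms.foldl .app H

namespace SNproof

def upr (ρ : ℕ → ℕ) : ℕ → ℕ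
  | 0 => 0
  | n+1 => ρ n + 1

def rename (ρ : ℕ → ℕ) : Term → Term
  | .var n => .var (ρ n)
  | .lam t => .lam (rename (upr ρ) t)
  | .app t u => .app (rename ρ t) (rename ρ u)

def upσ (σ : ℕ → Term) : ℕ → Term
  | 0 => .var 0
  | n+1 => rename Nat.succ (σ n)

def msubst (σ : ℕ → Term) : Term → Term
  | .var n => σ n
  | .lam t => .lam (msubst (upσ σ) t)
  | .app t u => .app (msubst σ t) (msubst σ u)

theorem rename_ext {ρ ρ' : ℕ → ℕ} (h : ∀ n, ρ n = ρ' n) (t : Term) :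
    rename ρ t = rename ρ' t := by
  induction t generalizing ρ ρ' with
  | var n => simp [rename, h]
  | lam t ih =>
    simp only [rename, Term.lam.injEq]
    exact ih (fun n => by cases n <;> simp [upr, h])
  | app t u iht ihu => simp [rename, iht h, ihu h]

theorem msubst_ext {σ σ' : ℕ → Term} (h : ∀ n, σ n = σ' n) (t : Term) :
    msubst σ t = msubst σ' t := by
  induction t generalizing σ σ' with
  | var n => simp [msubst, h]
  | lam t ih =>
    simp only [msubst, Term.lam.injEq]
    exact ih (fun n => by cases n <;> simp [upσ, h])
  | app t u iht ihu => simp [msubst, iht h, ihu h]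

theorem rename_rename (ρ ρ' : ℕ → ℕ) (t : Term) :
    rename ρ (rename ρ' t) = rename (fun n => ρ (ρ' n)) t := by
  induction t generalizing ρ ρ' with
  | var n => simp [rename]
  | lam t ih =>
    simp only [rename, Term.lam.injEq]
    rw [ih]
    exact rename_ext (fun n => by cases n <;> simp [upr]) t
  | app t u iht ihu => simp [rename, iht, ihu]

theorem msubst_rename (σ : ℕ → Term) (ρ : ℕ → ℕ) (t : Term) :
    msubst σ (rename ρ t) = msubst (fun n => σ (ρ n)) t := by
  induction t generalizing σ ρ with
  | var n => simp [rename, msubst]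
  | lam t ih =>
    simp only [rename, msubst, Term.lam.injEq]
    rw [ih]
    exact msubst_ext (fun n => by cases n <;> simp [upσ, upr]) t
  | app t u iht ihu => simp [rename, msubst, iht, ihu]

theorem rename_msubst (ρ : ℕ → ℕ) (σ : ℕ → Term) (t : Term) :
    rename ρ (msubst σ t) = msubst (fun n => rename ρ (σ n)) t := by
  induction t generalizing σ ρ with
  | var n => simp [rename, msubst]
  | lam t ih =>
    simp only [rename, msubst, Term.lam.injEq]
    rw [ih]
    refine msubst_ext (fun n => ?_) t
    cases n with
    | zero => simp [upσ, rename, upr]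
    | succ n => simp only [upσ, rename_rename]; exact rename_ext (fun m => by simp [upr]) _
  | app t u iht ihu => simp [rename, msubst, iht, ihu]

theorem msubst_msubst (σ σ' : ℕ → Term) (t : Term) :
    msubst σ (msubst σ' t) = msubst (fun n => msubst σ (σ' n)) t := by
  induction t generalizing σ σ' with
  | var n => simp [msubst]
  | lam t ih =>
    simp only [msubst, Term.lam.injEq]
    rw [ih]
    refine msubst_ext (fun n => ?_) t
    cases n with
    | zero => simp [upσ, msubst]
    | succ n =>
      simp only [upσ, msubst_rename, rename_msubst]
  | app t u iht ihu => simp [msubst, iht, ihu]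

theorem msubst_var (t : Term) : msubst Term.var t = t := by
  induction t with
  | var n => simp [msubst]
  | lam t ih =>
    simp only [msubst, Term.lam.injEq]
    rw [msubst_ext (σ' := Term.var) (fun n => by cases n <;> simp [upσ, rename]) t, ih]
  | app t u iht ihu => simp [msubst, iht, ihu]

/-- lift as a renaming. -/
theorem lift_eq (d : ℕ) (t : Term) :
    Term.lift d t = rename (fun n => if n < d then n else n + 1) t := by
  induction t generalizing d with
  | var n => simp [Term.lift, rename]
  | lam t ih =>
    simp only [Term.lift, rename, Term.lam.injEq]
    rw [ih]
    refine rename_ext (fun n => ?_) t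
    cases n with
    | zero => simp [upr]
    | succ n => simp only [upr]; split <;> split <;> omega
  | app t u iht ihu => simp [Term.lift, rename, iht, ihu]

theorem lift0_eq (t : Term) : Term.lift 0 t = rename Nat.succ t := by
  rw [lift_eq]; exact rename_ext (fun n => by simp) t

/-- the single-point substitution as a parallel substitution -/
def sub1 (k : ℕ) (u : Term) : ℕ → Term :=
  fun n => if n = k then u else .var (if n < k then n else n - 1)

theorem subst_eq (t : Term) (k : ℕ) (u : Term) :
    Term.subst t k u = msubst (sub1 k u) t := by
  induction t generalizing k u with
  | var n => simp [Term.subst, msubst, sub1]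
  | lam t ih =>
    simp only [Term.subst, msubst, Term.lam.injEq]
    rw [ih]
    refine msubst_ext (fun n => ?_) t
    cases n with
    | zero => simp [upσ, sub1]
    | succ n =>
      simp only [upσ, sub1, lift0_eq]
      by_cases h : n = k
      · simp [h]
      · have : ¬ (n + 1 = k + 1) := by omega
        simp only [h, this, if_false, rename, Term.var.injEq]
        split <;> split <;> omega
  | app t u iht ihu => simp [Term.subst, msubst, iht, ihu]

def scons (N : Term) (σ : ℕ → Term) : ℕ → Term
  | 0 => N
  | n+1 => σ n

/-- The key β-substitution lemma. -/
theorem subst_msubst_up (σ : ℕ → Term) (M N : Term) :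
    Term.subst (msubst (upσ σ) M) 0 N = msubst (scons N σ) M := by
  rw [subst_eq, msubst_msubst]
  refine msubst_ext (fun n => ?_) M
  cases n with
  | zero => simp [upσ, msubst, sub1, scons]
  | succ n =>
    show msubst (sub1 0 N) (rename Nat.succ (σ n)) = σ n
    rw [msubst_rename]
    have : (fun m => msubst (sub1 0 N) (Term.var (Nat.succ m))) = Term.var := by
      funext m; simp [msubst, sub1]
    rw [show (fun n_1 => sub1 0 N (Nat.succ n_1)) = (fun m => msubst (sub1 0 N) (Term.var (Nat.succ m))) from by funext m; simp [msubst], this, msubst_var]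

theorem msubst_subst (σ : ℕ → Term) (M N : Term) :
    msubst σ (Term.subst M 0 N) = Term.subst (msubst (upσ σ) M) 0 (msubst σ N) := by
  rw [subst_msubst_up, subst_eq, msubst_msubst]
  refine msubst_ext (fun n => ?_) M
  cases n with
  | zero => simp [sub1, scons]
  | succ n => simp [sub1, scons, msubst]

end SNproof
namespace SNproof

theorem rename_as_msubst (ρ : ℕ → ℕ) (t : Term) :
    rename ρ t = msubst (fun n => .var (ρ n)) t := by
  have := msubst_rename Term.var ρ t
  rwa [msubst_var] at this

theorem step_msubst' {r : Rule} {t t' : Term} (h : Step r t t')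
    (hr : r = Rule.beta) :
    ∀ σ, Step .beta (msubst σ t) (msubst σ t') := by
  induction h with
  | delta M N => exact Rule.noConfusion hr
  | gamma M N P => exact Rule.noConfusion hr
  | assoc M N P => exact Rule.noConfusion hr
  | beta M N =>
    intro σ
    show Step .beta (Term.app (.lam (msubst (upσ σ) M)) (msubst σ N)) _
    rw [msubst_subst]
    exact Step.beta _ _
  | appCongL u h ih => exact fun σ => Step.appCongL _ (ih hr σ)
  | appCongR t h ih => exact fun σ => Step.appCongR _ (ih hr σ)
  | lamCong h ih => exact fun σ => Step.lamCong (ih hr _)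

theorem step_msubst {t t' : Term} (σ : ℕ → Term) (h : Step .beta t t') :
    Step .beta (msubst σ t) (msubst σ t') := step_msubst' h rfl σ

theorem step_rename {t t' : Term} (ρ : ℕ → ℕ) (h : Step .beta t t') :
    Step .beta (rename ρ t) (rename ρ t') := by
  rw [rename_as_msubst, rename_as_msubst]
  exact step_msubst _ h

theorem step_subst {t t' : Term} (k : ℕ) (u : Term) (h : Step .beta t t') :
    Step .beta (Term.subst t k u) (Term.subst t' k u) := by
  rw [subst_eq, subst_eq]; exact step_msubst _ h

/-- Multi-step β-reduction. -/
abbrev SRed : Term → Term → Prop := Relation.ReflTransGen (fun a b => Step .beta a b)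

theorem sred_app {t t' u u' : Term} (ht : SRed t t') (hu : SRed u u') :
    SRed (.app t u) (.app t' u') := by
  refine Relation.ReflTransGen.trans (b := Term.app t' u) ?_ ?_
  · exact Relation.ReflTransGen.lift (fun x => Term.app x u) (fun a b h => Step.appCongL _ h) _ _ ht
  · exact Relation.ReflTransGen.lift (fun x => Term.app t' x) (fun a b h => Step.appCongR _ h) _ _ hu

theorem sred_rename {t t' : Term} (ρ : ℕ → ℕ) (h : SRed t t') :
    SRed (rename ρ t) (rename ρ t') :=
  Relation.ReflTransGen.lift (rename ρ) (fun _ _ h => step_rename ρ h) _ _ h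

theorem sred_msubst_pointwise {σ σ' : ℕ → Term} (h : ∀ n, SRed (σ n) (σ' n)) (t : Term) :
    SRed (msubst σ t) (msubst σ' t) := by
  induction t generalizing σ σ' with
  | var n => exact h n
  | lam t ih =>
    have : SRed (msubst (upσ σ) t) (msubst (upσ σ') t) := by
      refine ih (fun n => ?_)
      cases n with
      | zero => exact Relation.ReflTransGen.refl
      | succ n => exact sred_rename _ (h n)
    exact Relation.ReflTransGen.lift Term.lam (fun _ _ h => Step.lamCong h) _ _ this
  | app t u iht ihu => exact sred_app (iht h) (ihu h)

theorem sred_subst_right {u u' : Term} (t : Term) (k : ℕ) (h : Step .beta u u') :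
    SRed (Term.subst t k u) (Term.subst t k u') := by
  rw [subst_eq, subst_eq]
  refine sred_msubst_pointwise (fun n => ?_) t
  by_cases hn : n = k
  · simpa [sub1, hn] using Relation.ReflTransGen.single h
  · simp only [sub1, hn, if_false]
    exact Relation.ReflTransGen.refl

/-- SN is closed under reduction. -/
theorem snbeta_step {t t' : Term} (h : SNbeta t) (hs : Step .beta t t') : SNbeta t' := h.inv hs

theorem snbeta_sred {t t' : Term} (h : SNbeta t) (hs : SRed t t') : SNbeta t' := by
  induction hs with
  | refl => exact h
  | tail _ h2 ih => exact ih.inv h2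

/-- Pull back SN along a step-simulation. -/
theorem snbeta_of_sim {f : Term → Term}
    (hf : ∀ a b, Step .beta a b → Step .beta (f a) (f b)) {t : Term}
    (h : SNbeta (f t)) : SNbeta t := by
  have H : ∀ x, Acc (fun a b => Step .beta b a) x → ∀ t, f t = x → SNbeta t := by
    intro x hx
    induction hx with
    | intro x h ih =>
      intro t ht
      subst ht
      exact Acc.intro _ (fun u hu => ih _ (hf _ _ hu) u rfl)
  exact H _ h t rfl

theorem snbeta_app_left {M N : Term} (h : SNbeta (.app M N)) : SNbeta M :=
  snbeta_of_sim (fun a b hs => Step.appCongL N hs) h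

theorem snbeta_app_right {M N : Term} (h : SNbeta (.app M N)) : SNbeta N :=
  snbeta_of_sim (fun a b hs => Step.appCongR M hs) h

theorem snbeta_lam_inv {M : Term} (h : SNbeta (.lam M)) : SNbeta M :=
  snbeta_of_sim (fun a b hs => Step.lamCong hs) h

theorem snbeta_lam {M : Term} (h : SNbeta M) : SNbeta (.lam M) := by
  induction h with
  | intro x hx ih =>
    refine Acc.intro _ (fun u hu => ?_)
    cases hu with
    | lamCong h' => exact ih _ h'

theorem snbeta_var (n : ℕ) : SNbeta (.var n) :=
  Acc.intro _ (fun u hu => by cases hu)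

theorem snbeta_of_subst {P N : Term} (h : SNbeta (Term.subst P 0 N)) : SNbeta P :=
  snbeta_of_sim (fun a b hs => step_subst 0 N hs) h

end SNproof
namespace SNproof

mutual
/-- Reducibility for simple types. -/
def Red : STy → Term → Prop
  | .atom _, M => SNbeta M
  | .arrow A S, M => ∀ N, RedT A N → Red S (.app M N)
/-- Reducibility for intersection types. -/
def RedT : Ty → Term → Prop
  | .simple S, M => Red S M
  | .inter S T, M => Red S M ∧ RedT T M
end

def Neutral : Term → Prop
  | .lam _ => False
  | _ => True

theorem neutral_app (M N : Term) : Neutral (.app M N) := trivial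
theorem neutral_var (n : ℕ) : Neutral (.var n) := trivial

mutual
theorem cr2 : ∀ (S : STy) {M M'}, Red S M → Step .beta M M' → Red S M'
  | .atom _, M, M', h, hs => snbeta_step h hs
  | .arrow A S, M, M', h, hs => fun N hN => cr2 S (h N hN) (Step.appCongL N hs)
theorem crT2 : ∀ (A : Ty) {M M'}, RedT A M → Step .beta M M' → RedT A M'
  | .simple S, M, M', h, hs => cr2 S h hs
  | .inter S T, M, M', h, hs => ⟨cr2 S h.1 hs, crT2 T h.2 hs⟩
end

theorem crT2_sred {A : Ty} {M M' : Term} (h : RedT A M) (hs : SRed M M') : RedT A M' := by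
  induction hs with
  | refl => exact h
  | tail _ h2 ih => exact crT2 _ ih h2

mutual
theorem cr1 : ∀ (S : STy) (M : Term), Red S M → SNbeta M
  | .atom _, M, h => h
  | .arrow A S, M, h => by
    have hvar : RedT A (.var 0) :=
      crT3 A (.var 0) (neutral_var 0) (fun M' hs => by cases hs)
    exact snbeta_app_left (cr1 S _ (h _ hvar))
theorem crT1 : ∀ (A : Ty) (M : Term), RedT A M → SNbeta M
  | .simple S, M, h => cr1 S M h
  | .inter S T, M, h => cr1 S M h.1
theorem cr3 : ∀ (S : STy) (M : Term), Neutral M →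
    (∀ M', Step .beta M M' → Red S M') → Red S M
  | .atom _, M, hne, h => Acc.intro _ (fun M' hs => h M' hs)
  | .arrow A S, M, hne, h => by
    intro N hN
    have hSN : SNbeta N := crT1 A N hN
    revert hN
    induction hSN with
    | intro N hNacc ih =>
      intro hN
      refine cr3 S _ (neutral_app M N) (fun M' hs => ?_)
      cases hs with
      | beta P Q => exact absurd hne (by simp [Neutral])
      | appCongL u hs' => exact h _ hs' N hN
      | appCongR t hs' => exact ih _ hs' (crT2 A hN hs')
theorem crT3 : ∀ (A : Ty) (M : Term), Neutral M →
    (∀ M', Step .beta M M' → RedT A M') → RedT A M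
  | .simple S, M, hne, h => cr3 S M hne h
  | .inter S T, M, hne, h =>
    ⟨cr3 S M hne (fun M' hs => (h M' hs).1), crT3 T M hne (fun M' hs => (h M' hs).2)⟩
end

theorem redT_var (A : Ty) (n : ℕ) : RedT A (.var n) :=
  crT3 A _ (neutral_var n) (fun M' hs => by cases hs)

/-- Saturation: closure under head expansion. -/
theorem red_sat (S : STy) (P N : Term) (hP : SNbeta P) (hN : SNbeta N)
    (h : Red S (Term.subst P 0 N)) : Red S (.app (.lam P) N) := by
  induction hP generalizing N with
  | intro P hPacc ihP =>
    induction hN with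
    | intro N hNacc ihN =>
      refine cr3 S _ (neutral_app _ _) (fun M' hs => ?_)
      cases hs with
      | beta => exact h
      | appCongL u hs' =>
        cases hs' with
        | lamCong hs'' =>
          exact ihP _ hs'' _ (Acc.intro _ hNacc) (cr2 S h (step_subst 0 N hs''))
      | appCongR t hs' =>
        exact ihN _ hs' (crT2_sred (A := .simple S) h (sred_subst_right P 0 hs'))
end SNproof
namespace SNproof

theorem RedT_simple (S : STy) (M : Term) : RedT (.simple S) M ↔ Red S M := by
  rw [RedT]
theorem RedT_inter (S : STy) (T : Ty) (M : Term) :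
    RedT (.inter S T) M ↔ Red S M ∧ RedT T M := by rw [RedT]
theorem Red_arrow (A : Ty) (S : STy) (M : Term) :
    Red (.arrow A S) M ↔ ∀ N, RedT A N → Red S (.app M N) := by rw [Red]

theorem adequacy {Γ : List Ty} {M : Term} {A : Ty} (h : Typing Γ M A) :
    ∀ σ : ℕ → Term, (∀ n B, Γ[n]? = some B → RedT B (σ n)) → RedT A (msubst σ M) := by
  induction h with
  | var hlook =>
    intro σ hσ
    exact hσ _ _ hlook
  | app hM hN ihM ihN =>
    intro σ hσ
    rw [RedT_simple]
    have h1 := (RedT_simple _ _).1 (ihM σ hσ)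
    rw [Red_arrow] at h1
    exact h1 _ (ihN σ hσ)
  | lam hM ih =>
    intro σ hσ
    rw [RedT_simple, Red_arrow]
    intro N hN
    rename_i Γ' M' A' B'
    have hgood : ∀ n B, (A' :: Γ')[n]? = some B → RedT B (scons N σ n) := by
      intro n B hl
      cases n with
      | zero => simp at hl; subst hl; exact hN
      | succ n => exact hσ n B (by simpa using hl)
    have hbody := ih (scons N σ) hgood
    rw [RedT_simple] at hbody
    rw [← subst_msubst_up σ M' N] at hbody
    have hP : SNbeta (msubst (upσ σ) M') := snbeta_of_subst (cr1 _ _ hbody)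
    exact red_sat _ _ _ hP (crT1 _ _ hN) hbody
  | interI h1 h2 ih1 ih2 =>
    intro σ hσ
    rw [RedT_inter]
    exact ⟨(RedT_simple _ _).1 (ih1 σ hσ), ih2 σ hσ⟩
  | interE1 h ih =>
    intro σ hσ
    rw [RedT_simple]
    exact ((RedT_inter _ _ _).1 (ih σ hσ)).1
  | interE2 h ih =>
    intro σ hσ
    exact ((RedT_inter _ _ _).1 (ih σ hσ)).2

theorem typable_snbeta {t : Term} (h : Typable t) : SNbeta t := by
  obtain ⟨Γ, A, hT⟩ := h
  have := adequacy hT Term.var (fun n B _ => redT_var B n)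
  rw [msubst_var] at this
  exact crT1 _ _ this

end SNproof
namespace SNproof

/-! ### Components of intersection types -/

def comps : Ty → List STy
  | .simple S => [S]
  | .inter S T => S :: comps T

theorem comps_ne_nil (A : Ty) : comps A ≠ [] := by
  cases A <;> simp [comps]

theorem extract : ∀ (A : Ty) {Γ M S}, Typing Γ M A → S ∈ comps A → Typing Γ M (.simple S)
  | .simple S', Γ, M, S, h, hS => by
    simp [comps] at hS; subst hS; exact h
  | .inter S' T, Γ, M, S, h, hS => by
    rcases List.mem_cons.mp hS with rfl | hS'
    · exact Typing.interE1 h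
    · exact extract T (Typing.interE2 h) hS'

theorem rebuild : ∀ (A : Ty) {Γ M}, (∀ S ∈ comps A, Typing Γ M (.simple S)) → Typing Γ M A
  | .simple S, Γ, M, h => h S (by simp [comps])
  | .inter S T, Γ, M, h =>
    Typing.interI (h S (by simp [comps]))
      (rebuild T (fun S' hS' => h S' (by simp [comps, hS'])))

def glue : Ty → Ty → Ty
  | .simple S, B => .inter S B
  | .inter S T, B => .inter S (glue T B)

theorem comps_glue : ∀ (A B : Ty), comps (glue A B) = comps A ++ comps B
  | .simple S, B => by simp [glue, comps]
  | .inter S T, B => by simp [glue, comps, comps_glue T B]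

theorem glue_typing {Γ M A B} (hA : Typing Γ M A) (hB : Typing Γ M B) :
    Typing Γ M (glue A B) := by
  refine rebuild _ (fun S hS => ?_)
  rw [comps_glue] at hS
  rcases List.mem_append.mp hS with h | h
  · exact extract _ hA h
  · exact extract _ hB h

/-! ### Context strengthening -/

abbrev CtxLE (Γ Δ : List Ty) : Prop :=
  ∀ (n : ℕ) (A : Ty), Γ[n]? = some A → ∃ B, Δ[n]? = some B ∧ ∀ S ∈ comps A, S ∈ comps B

theorem ctxLE_refl (Γ : List Ty) : CtxLE Γ Γ :=
  fun _ A h => ⟨A, h, fun _ hS => hS⟩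

theorem ctxLE_cons {Γ Δ : List Ty} (X : Ty) (h : CtxLE Γ Δ) : CtxLE (X :: Γ) (X :: Δ) := by
  intro n A hl
  cases n with
  | zero => exact ⟨X, by simpa using (by simpa using hl : X = A) ▸ rfl, by
      simp at hl; subst hl; exact fun _ hS => hS⟩
  | succ n =>
    obtain ⟨B, h1, h2⟩ := h n A (by simpa using hl)
    exact ⟨B, by simpa using h1, h2⟩

theorem typing_var_of_comps {Γ : List Ty} {n : ℕ} {A B : Ty}
    (hl : Γ[n]? = some B) (hsub : ∀ S ∈ comps A, S ∈ comps B) :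
    Typing Γ (.var n) A :=
  rebuild _ (fun S hS => extract _ (Typing.var hl) (hsub S hS))

theorem strengthen {Γ M A} (h : Typing Γ M A) : ∀ {Δ}, CtxLE Γ Δ → Typing Δ M A := by
  induction h with
  | var hl =>
    intro Δ hle
    obtain ⟨B, h1, h2⟩ := hle _ _ hl
    exact typing_var_of_comps h1 h2
  | app h1 h2 ih1 ih2 => exact fun hle => Typing.app (ih1 hle) (ih2 hle)
  | lam h1 ih => exact fun hle => Typing.lam (ih (ctxLE_cons _ hle))
  | interI h1 h2 ih1 ih2 => exact fun hle => Typing.interI (ih1 hle) (ih2 hle)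
  | interE1 h1 ih => exact fun hle => Typing.interE1 (ih hle)
  | interE2 h1 ih => exact fun hle => Typing.interE2 (ih hle)

def glueCtx : List Ty → List Ty → List Ty
  | [], Δ => Δ
  | A :: Γ, [] => A :: Γ
  | A :: Γ, B :: Δ => glue A B :: glueCtx Γ Δ

theorem ctxLE_glueCtx_left : ∀ Γ Δ, CtxLE Γ (glueCtx Γ Δ)
  | [], Δ => fun n A h => by simp at h
  | A :: Γ, [] => ctxLE_refl _
  | A :: Γ, B :: Δ => by
    intro n C hl
    cases n with
    | zero =>
      simp at hl; subst hl
      exact ⟨glue A B, by simp [glueCtx], fun S hS => by rw [comps_glue]; exact List.mem_append_left _ hS⟩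
    | succ n =>
      obtain ⟨E, h1, h2⟩ := ctxLE_glueCtx_left Γ Δ n C (by simpa using hl)
      exact ⟨E, by simpa [glueCtx] using h1, h2⟩

theorem ctxLE_glueCtx_right : ∀ Γ Δ, CtxLE Δ (glueCtx Γ Δ)
  | [], Δ => ctxLE_refl _
  | A :: Γ, [] => fun n C h => by simp at h
  | A :: Γ, B :: Δ => by
    intro n C hl
    cases n with
    | zero =>
      simp at hl; subst hl
      exact ⟨glue A B, by simp [glueCtx], fun S hS => by rw [comps_glue]; exact List.mem_append_right _ hS⟩
    | succ n =>
      obtain ⟨E, h1, h2⟩ := ctxLE_glueCtx_right Γ Δ n C (by simpa using hl)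
      exact ⟨E, by simpa [glueCtx] using h1, h2⟩

theorem combine {Γ₁ Γ₂ : List Ty} {X Y : Term} {A B : Ty}
    (h1 : Typing Γ₁ X A) (h2 : Typing Γ₂ Y B) :
    ∃ Δ, Typing Δ X A ∧ Typing Δ Y B :=
  ⟨glueCtx Γ₁ Γ₂, strengthen h1 (ctxLE_glueCtx_left _ _),
    strengthen h2 (ctxLE_glueCtx_right _ _)⟩

/-- Strengthening a single middle entry. -/
theorem ctxLE_mid (Γ₁ Γ₂ : List Ty) {C₁ C : Ty} (h : ∀ S ∈ comps C₁, S ∈ comps C) :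
    CtxLE (Γ₁ ++ C₁ :: Γ₂) (Γ₁ ++ C :: Γ₂) := by
  induction Γ₁ with
  | nil =>
    intro n A hl
    cases n with
    | zero => simp at hl; subst hl; exact ⟨C, by simp, h⟩
    | succ n => exact ⟨A, by simpa using hl, fun _ hS => hS⟩
  | cons X Γ₁ ih => exact ctxLE_cons X ih

theorem ctxLE_append (Γ Θ : List Ty) : CtxLE Γ (Γ ++ Θ) := by
  intro n A hl
  refine ⟨A, ?_, fun _ hS => hS⟩
  rw [List.getElem?_append, if_pos (List.getElem?_eq_some_iff.mp hl).1]
  exact hl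

end SNproof
namespace SNproof

/-! ### Generation lemmas -/

theorem gen_var' {Γ M A} (h : Typing Γ M A) :
    ∀ n, M = .var n → ∃ B, Γ[n]? = some B ∧ ∀ S ∈ comps A, S ∈ comps B := by
  induction h with
  | var hl =>
    intro n he
    injection he with he
    subst he
    exact ⟨_, hl, fun _ hS => hS⟩
  | app _ _ _ _ => rintro n ⟨⟩
  | lam _ _ => rintro n ⟨⟩
  | interI h1 h2 ih1 ih2 =>
    rintro n rfl
    obtain ⟨B1, hl1, hs1⟩ := ih1 n rfl
    obtain ⟨B2, hl2, hs2⟩ := ih2 n rfl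
    rw [hl1] at hl2
    injection hl2 with hB
    refine ⟨B1, hl1, fun S hS => ?_⟩
    rcases List.mem_cons.mp hS with rfl | hS'
    · exact hs1 S (by simp [comps])
    · exact hB ▸ hs2 S hS'
  | interE1 h1 ih =>
    rintro n rfl
    obtain ⟨B, hl, hs⟩ := ih n rfl
    refine ⟨B, hl, fun S hS => ?_⟩
    simp [comps] at hS; subst hS
    exact hs S (by simp [comps])
  | interE2 h1 ih =>
    rintro n rfl
    obtain ⟨B, hl, hs⟩ := ih n rfl
    exact ⟨B, hl, fun S hS => hs S (by simp [comps, hS])⟩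

theorem gen_var {Γ n A} (h : Typing Γ (.var n) A) :
    ∃ B, Γ[n]? = some B ∧ ∀ S ∈ comps A, S ∈ comps B := gen_var' h n rfl

theorem gen_app' {Γ M A} (h : Typing Γ M A) :
    ∀ P Q, M = .app P Q → ∀ S ∈ comps A,
      ∃ D, Typing Γ P (.simple (.arrow D S)) ∧ Typing Γ Q D := by
  induction h with
  | var hl => rintro P Q ⟨⟩
  | app h1 h2 ih1 ih2 =>
    intro P Q he S hS
    injection he with e1 e2
    subst e1; subst e2
    simp [comps] at hS; subst hS
    exact ⟨_, h1, h2⟩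
  | lam _ _ => rintro P Q ⟨⟩
  | interI h1 h2 ih1 ih2 =>
    rintro P Q rfl S hS
    rcases List.mem_cons.mp hS with rfl | hS'
    · exact ih1 P Q rfl S (by simp [comps])
    · exact ih2 P Q rfl S hS'
  | interE1 h1 ih =>
    rintro P Q rfl S hS
    simp [comps] at hS; subst hS
    exact ih P Q rfl _ (by simp [comps])
  | interE2 h1 ih =>
    rintro P Q rfl S hS
    exact ih P Q rfl S (by simp [comps, hS])

theorem gen_app {Γ P Q A} (h : Typing Γ (.app P Q) A) :
    ∀ S ∈ comps A, ∃ D, Typing Γ P (.simple (.arrow D S)) ∧ Typing Γ Q D :=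
  gen_app' h P Q rfl

theorem gen_lam' {Γ M A} (h : Typing Γ M A) :
    ∀ P, M = .lam P → ∀ S ∈ comps A,
      ∃ D E, S = .arrow D E ∧ Typing (D :: Γ) P (.simple E) := by
  induction h with
  | var hl => rintro P ⟨⟩
  | app _ _ _ _ => rintro P ⟨⟩
  | lam h1 ih =>
    intro P he S hS
    injection he with he
    subst he
    simp [comps] at hS; subst hS
    exact ⟨_, _, rfl, h1⟩
  | interI h1 h2 ih1 ih2 =>
    rintro P rfl S hS
    rcases List.mem_cons.mp hS with rfl | hS'
    · exact ih1 P rfl S (by simp [comps])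
    · exact ih2 P rfl S hS'
  | interE1 h1 ih =>
    rintro P rfl S hS
    simp [comps] at hS; subst hS
    exact ih P rfl _ (by simp [comps])
  | interE2 h1 ih =>
    rintro P rfl S hS
    exact ih P rfl S (by simp [comps, hS])

theorem gen_lam {Γ P A} (h : Typing Γ (.lam P) A) :
    ∀ S ∈ comps A, ∃ D E, S = .arrow D E ∧ Typing (D :: Γ) P (.simple E) :=
  gen_lam' h P rfl

/-! ### Weakening and lift inversion -/

theorem weaken_lift {Γ M A} (h : Typing Γ M A) :
    ∀ Γ₁ Γ₂ (X : Ty), Γ = Γ₁ ++ Γ₂ →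
      Typing (Γ₁ ++ X :: Γ₂) (Term.lift Γ₁.length M) A := by
  induction h with
  | var hl =>
    rintro Γ₁ Γ₂ X rfl
    rename_i n A
    simp only [Term.lift]
    refine Typing.var ?_
    rw [List.getElem?_append] at hl
    split at hl
    · rw [if_pos (by assumption), List.getElem?_append, if_pos (by assumption)]
      exact hl
    · rename_i hn
      rw [if_neg hn, List.getElem?_append, if_neg (by omega)]
      simp only [List.getElem?_cons]
      rw [if_neg (by omega)]
      have : n + 1 - Γ₁.length - 1 = n - Γ₁.length := by omega
      rw [this]
      exact hl
  | app h1 h2 ih1 ih2 =>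
    rintro Γ₁ Γ₂ X rfl
    exact Typing.app (ih1 Γ₁ Γ₂ X rfl) (ih2 Γ₁ Γ₂ X rfl)
  | lam h1 ih =>
    rintro Γ₁ Γ₂ X rfl
    exact Typing.lam (ih (_ :: Γ₁) Γ₂ X rfl)
  | interI h1 h2 ih1 ih2 =>
    rintro Γ₁ Γ₂ X rfl
    exact Typing.interI (ih1 Γ₁ Γ₂ X rfl) (ih2 Γ₁ Γ₂ X rfl)
  | interE1 h1 ih => rintro Γ₁ Γ₂ X rfl; exact Typing.interE1 (ih Γ₁ Γ₂ X rfl)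
  | interE2 h1 ih => rintro Γ₁ Γ₂ X rfl; exact Typing.interE2 (ih Γ₁ Γ₂ X rfl)

theorem weaken0 {Γ M A} (X : Ty) (h : Typing Γ M A) :
    Typing (X :: Γ) (Term.lift 0 M) A :=
  weaken_lift h [] Γ X rfl

theorem lift_inv : ∀ (M : Term) {Γ₁ Γ₂ : List Ty} {X A},
    Typing (Γ₁ ++ X :: Γ₂) (Term.lift Γ₁.length M) A → Typing (Γ₁ ++ Γ₂) M A := by
  intro M
  induction M with
  | var n =>
    intro Γ₁ Γ₂ X A h
    simp only [Term.lift] at h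
    obtain ⟨B, hl, hs⟩ := gen_var h
    refine typing_var_of_comps (B := B) ?_ hs
    split at hl
    · rw [List.getElem?_append, if_pos (by assumption)] at hl ⊢
      exact hl
    · rename_i hn
      rw [List.getElem?_append, if_neg (by omega)] at hl
      simp only [List.getElem?_cons] at hl
      rw [if_neg (by omega)] at hl
      rw [List.getElem?_append, if_neg hn]
      have : n + 1 - Γ₁.length - 1 = n - Γ₁.length := by omega
      rw [this] at hl
      exact hl
  | lam P ih =>
    intro Γ₁ Γ₂ X A h
    simp only [Term.lift] at h
    refine rebuild _ (fun S hS => ?_)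
    obtain ⟨D, E, rfl, hP⟩ := gen_lam h S hS
    exact Typing.lam (ih (Γ₁ := D :: Γ₁) hP)
  | app P Q ihP ihQ =>
    intro Γ₁ Γ₂ X A h
    simp only [Term.lift] at h
    refine rebuild _ (fun S hS => ?_)
    obtain ⟨D, h1, h2⟩ := gen_app h S hS
    exact Typing.app (ihP h1) (ihQ h2)

theorem lift0_inv {Γ M A X} (h : Typing (X :: Γ) (Term.lift 0 M) A) : Typing Γ M A :=
  lift_inv M (Γ₁ := []) h

/-! ### Substitution inversion -/

theorem glueUp : ∀ (A : Ty) {Γ₁ Γ₂ : List Ty} {P u : Term},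
    (∀ S ∈ comps A, ∃ C, Typing (Γ₁ ++ C :: Γ₂) P (.simple S) ∧ Typing (Γ₁ ++ Γ₂) u C) →
    ∃ C, Typing (Γ₁ ++ C :: Γ₂) P A ∧ Typing (Γ₁ ++ Γ₂) u C
  | .simple S, Γ₁, Γ₂, P, u, h => h S (by simp [comps])
  | .inter S T, Γ₁, Γ₂, P, u, h => by
    obtain ⟨C₁, hP1, hu1⟩ := h S (by simp [comps])
    obtain ⟨C₂, hP2, hu2⟩ := glueUp T (fun S' hS' => h S' (by simp [comps, hS']))
    refine ⟨glue C₁ C₂, Typing.interI ?_ ?_, glue_typing hu1 hu2⟩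
    · exact strengthen hP1 (ctxLE_mid Γ₁ Γ₂
        (fun S' hS' => by rw [comps_glue]; exact List.mem_append_left _ hS'))
    · exact strengthen hP2 (ctxLE_mid Γ₁ Γ₂
        (fun S' hS' => by rw [comps_glue]; exact List.mem_append_right _ hS'))

theorem subst_inv : ∀ (P : Term) {Γ₁ Γ₂ : List Ty} {u : Term} {A B₀ : Ty},
    Typing (Γ₁ ++ Γ₂) (Term.subst P Γ₁.length u) A → Typing (Γ₁ ++ Γ₂) u B₀ →
    ∃ C, Typing (Γ₁ ++ C :: Γ₂) P A ∧ Typing (Γ₁ ++ Γ₂) u C := by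
  intro P
  induction P with
  | var n =>
    intro Γ₁ Γ₂ u A B₀ hA hu
    simp only [Term.subst] at hA
    by_cases hn : n = Γ₁.length
    · rw [if_pos hn] at hA
      refine ⟨A, Typing.var ?_, hA⟩
      rw [List.getElem?_append, if_neg (by omega), hn]
      simp
    · rw [if_neg hn] at hA
      obtain ⟨B, hl, hs⟩ := gen_var hA
      refine ⟨B₀, typing_var_of_comps (B := B) ?_ hs, hu⟩
      split at hl
      · rw [List.getElem?_append, if_pos (by assumption)] at hl ⊢
        exact hl
      · rename_i hnn
        rw [List.getElem?_append, if_neg (by omega)] at hl ⊢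
        simp only [List.getElem?_cons]
        rw [if_neg (by omega)]
        have : n - Γ₁.length - 1 = n - 1 - Γ₁.length := by omega
        rw [this]
        exact hl
  | lam t ih =>
    intro Γ₁ Γ₂ u A B₀ hA hu
    simp only [Term.subst] at hA
    refine glueUp A (fun S hS => ?_)
    obtain ⟨D, E, rfl, ht⟩ := gen_lam hA S hS
    obtain ⟨C, h1, h2⟩ := ih (Γ₁ := D :: Γ₁) ht (weaken0 D hu)
    exact ⟨C, Typing.lam h1, lift0_inv h2⟩
  | app t v iht ihv =>
    intro Γ₁ Γ₂ u A B₀ hA hu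
    simp only [Term.subst] at hA
    refine glueUp A (fun S hS => ?_)
    obtain ⟨D, h1, h2⟩ := gen_app hA S hS
    obtain ⟨C₁, ht1, hu1⟩ := iht h1 hu
    obtain ⟨C₂, hv2, hu2⟩ := ihv h2 hu
    refine ⟨glue C₁ C₂, Typing.app
      (strengthen ht1 (ctxLE_mid _ _ (fun S' hS' => by
        rw [comps_glue]; exact List.mem_append_left _ hS')))
      (strengthen hv2 (ctxLE_mid _ _ (fun S' hS' => by
        rw [comps_glue]; exact List.mem_append_right _ hS'))),
      glue_typing hu1 hu2⟩

/-- Subject expansion at a β-redex in head position. -/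
theorem head_exp {Γ P M A B₀} (h : Typing Γ (Term.subst P 0 M) A)
    (hM : Typing Γ M B₀) : Typing Γ (.app (.lam P) M) A := by
  obtain ⟨C, hP, hMC⟩ := subst_inv P (Γ₁ := []) h hM
  refine rebuild _ (fun S hS => ?_)
  exact Typing.app (Typing.lam (extract _ hP hS)) hMC

end SNproof
namespace SNproof

theorem appList_append (H : Term) (Ms : List Term) (M : Term) :
    appList H (Ms ++ [M]) = .app (appList H Ms) M := by
  simp [appList]

theorem appList_cons (H : Term) (M : Term) (Ms : List Term) :
    appList H (M :: Ms) = appList (.app H M) Ms := rfl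

/-- Replace the head of an application spine, given that the new head admits
every type of the old head. -/
theorem spine_replace {Γ : List Ty} {R R' : Term}
    (hrep : ∀ A, Typing Γ R A → Typing Γ R' A) :
    ∀ (Ms : List Term) (A : Ty), Typing Γ (appList R Ms) A → Typing Γ (appList R' Ms) A := by
  intro Ms
  induction Ms using List.reverseRecOn with
  | nil => exact fun A h => hrep A h
  | append_singleton Ms M ih =>
    intro A h
    rw [appList_append] at h ⊢
    refine rebuild _ (fun S hS => ?_)
    obtain ⟨D, h1, h2⟩ := gen_app h S hS
    exact Typing.app (ih _ h1) h2

/-- A variable applied to typable terms is typable, with any target type. -/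
theorem varhead : ∀ (Ms : List Term), (∀ M ∈ Ms, Typable M) → ∀ (n : ℕ) (S : STy),
    ∃ Γ, Typing Γ (appList (.var n) Ms) (.simple S) := by
  intro Ms
  induction Ms using List.reverseRecOn with
  | nil =>
    intro _ n S
    refine ⟨List.replicate n (.simple (.atom 0)) ++ [.simple S], Typing.var ?_⟩
    simp [List.getElem?_append]
  | append_singleton Ms M ih =>
    intro hMs n S
    obtain ⟨Γ', A, hA⟩ := hMs M (by simp)
    obtain ⟨Γ₀, h₀⟩ := ih (fun M' hM' => hMs M' (by simp [hM'])) n (.arrow A S)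
    obtain ⟨Δ, h1, h2⟩ := combine h₀ hA
    rw [appList_append]
    exact ⟨Δ, Typing.app h1 h2⟩

/-! ### Subterms -/

inductive Sub : Term → Term → Prop
  | refl (t) : Sub t t
  | lam {s t} : Sub s t → Sub s (.lam t)
  | appL {s t u} : Sub s t → Sub s (.app t u)
  | appR {s t u} : Sub s u → Sub s (.app t u)

theorem Sub.trans {s t v : Term} (h1 : Sub s t) (h2 : Sub t v) : Sub s v := by
  induction h2 with
  | refl => exact h1
  | lam _ ih => exact Sub.lam ih
  | appL _ ih => exact Sub.appL ih
  | appR _ ih => exact Sub.appR ih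

theorem sub_step {s t s' : Term} (h : Sub s t) (hs : Step .beta s s') :
    ∃ t', Step .beta t t' ∧ Sub s' t' := by
  induction h with
  | refl => exact ⟨s', hs, Sub.refl _⟩
  | lam _ ih =>
    obtain ⟨t', h1, h2⟩ := ih
    exact ⟨.lam t', Step.lamCong h1, Sub.lam h2⟩
  | appL _ ih =>
    obtain ⟨t', h1, h2⟩ := ih
    exact ⟨.app t' _, Step.appCongL _ h1, Sub.appL h2⟩
  | appR _ ih =>
    obtain ⟨t', h1, h2⟩ := ih
    exact ⟨.app _ t', Step.appCongR _ h1, Sub.appR h2⟩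

theorem sub_appList : ∀ (Ms : List Term) (H : Term), Sub H (appList H Ms)
  | [], H => Sub.refl H
  | M :: Ms, H =>
    Sub.trans (Sub.appL (Sub.refl H)) (sub_appList Ms (.app H M))

theorem mem_sub_appList : ∀ (Ms : List Term) (H M : Term), M ∈ Ms → Sub M (appList H Ms) := by
  intro Ms
  induction Ms with
  | nil => intro H M h; simp at h
  | cons X Ms ih =>
    intro H M h
    rcases List.mem_cons.mp h with rfl | h'
    · exact Sub.trans (Sub.appR (Sub.refl M)) (sub_appList Ms (.app H M))
    · exact ih (.app H X) M h'

theorem size_le_appList : ∀ (Ms : List Term) (H : Term), sizeOf H ≤ sizeOf (appList H Ms)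
  | [], H => le_refl _
  | M :: Ms, H => by
    have := size_le_appList Ms (.app H M)
    rw [appList_cons]
    have h2 : sizeOf H < sizeOf (Term.app H M) := by simp; omega
    omega

theorem mem_size_appList : ∀ (Ms : List Term) (H M : Term), M ∈ Ms →
    sizeOf M < sizeOf (appList H Ms) := by
  intro Ms
  induction Ms with
  | nil => intro H M h; simp at h
  | cons X Ms ih =>
    intro H M h
    rcases List.mem_cons.mp h with rfl | h'
    · have := size_le_appList Ms (Term.app H M)
      rw [appList_cons]
      have h2 : sizeOf M < sizeOf (Term.app H M) := by simp
      omega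
    · exact ih (.app H X) M h'

theorem step_appList {r : Rule} {H H' : Term} (h : Step r H H') :
    ∀ Ms : List Term, Step r (appList H Ms) (appList H' Ms) := by
  intro Ms
  induction Ms generalizing H H' h with
  | nil => exact h
  | cons M Ms ih => exact ih (Step.appCongL M h)

theorem spine_decomp : ∀ s : Term,
    (∃ n Ms, s = appList (.var n) Ms) ∨ (∃ P Ms, s = appList (.lam P) Ms) := by
  intro s
  induction s with
  | var n => exact Or.inl ⟨n, [], rfl⟩
  | lam P _ => exact Or.inr ⟨P, [], rfl⟩
  | app f a ihf _ =>
    rcases ihf with ⟨n, Ms, rfl⟩ | ⟨P, Ms, rfl⟩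
    · exact Or.inl ⟨n, Ms ++ [a], by rw [appList_append]⟩
    · exact Or.inr ⟨P, Ms ++ [a], by rw [appList_append]⟩

/-! ### Main induction: SN implies typable -/

theorem typable_var (n : ℕ) : Typable (.var n) := by
  refine ⟨List.replicate n (.simple (.atom 0)) ++ [.simple (.atom 0)], .simple (.atom 0),
    Typing.var ?_⟩
  simp [List.getElem?_append]

theorem sn_typable_aux : ∀ t : Term, SNbeta t → ∀ s, Sub s t → Typable s := by
  intro t ht
  induction ht with
  | intro t _ ih =>
    -- ih : ∀ t', Step .beta t t' → ∀ s, Sub s t' → Typable s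
    have H : ∀ (k : ℕ) (s : Term), sizeOf s = k → Sub s t → Typable s := by
      intro k
      induction k using Nat.strong_induction_on with
      | _ k ihk =>
        intro s hk hsub
        match s with
        | .var n => exact typable_var n
        | .lam P =>
          have hP : Typable P := by
            refine ihk (sizeOf P) ?_ P rfl (Sub.trans (Sub.lam (Sub.refl P)) hsub)
            subst hk; simp
          obtain ⟨Γ, A, hA⟩ := hP
          obtain ⟨S, hS⟩ : ∃ S, S ∈ comps A := by
            cases e : comps A with
            | nil => exact absurd e (comps_ne_nil A)
            | cons S l => exact ⟨S, by simp [e]⟩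
          have h1 : Typing (Γ ++ [Ty.simple (.atom 0)]) P (.simple S) :=
            strengthen (extract _ hA hS) (ctxLE_append Γ _)
          rcases e : Γ ++ [Ty.simple (.atom 0)] with _ | ⟨B, Δ⟩
          · exact absurd e (by simp)
          · rw [e] at h1
            exact ⟨Δ, _, Typing.lam h1⟩
        | .app f a =>
          rcases spine_decomp (.app f a) with ⟨n, Ms, he⟩ | ⟨P, Ms, he⟩
          · -- variable head
            have hMs : ∀ M ∈ Ms, Typable M := by
              intro M hM
              refine ihk (sizeOf M) ?_ M rfl
                (Sub.trans (he ▸ mem_sub_appList Ms _ M hM) hsub)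
              have := mem_size_appList Ms (.var n) M hM
              rw [← he] at this
              omega
            obtain ⟨Γ, hΓ⟩ := varhead Ms hMs n (.atom 0)
            exact ⟨Γ, _, he ▸ hΓ⟩
          · -- lam head: Ms must be nonempty
            match Ms, he with
            | M :: rest, he =>
              rw [appList_cons] at he
              -- the head β-step
              have hstep : Step .beta (Term.app f a)
                  (appList (Term.subst P 0 M) rest) := by
                rw [he]
                exact step_appList (Step.beta P M) rest
              obtain ⟨t₁, ht₁, hsub₁⟩ := sub_step hsub hstep
              obtain ⟨Γ₀, A₀, h₀⟩ := ih t₁ ht₁ _ hsub₁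
              -- M is typable (smaller subterm)
              have hM : Typable M := by
                refine ihk (sizeOf M) ?_ M rfl ?_
                · have := mem_size_appList (M :: rest) (Term.lam P) M (by simp)
                  rw [appList_cons, ← he] at this
                  omega
                · refine Sub.trans ?_ hsub
                  rw [he]
                  exact mem_sub_appList (M :: rest) (Term.lam P) M (by simp)
              obtain ⟨Γ₁, B₁, h₁⟩ := hM
              obtain ⟨Δ, hd₀, hd₁⟩ := combine h₀ h₁
              have hrep : ∀ A, Typing Δ (Term.subst P 0 M) A →
                  Typing Δ (Term.app (.lam P) M) A :=
                fun A h => head_exp h hd₁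
              refine ⟨Δ, A₀, ?_⟩
              rw [he]
              exact spine_replace hrep rest A₀ hd₀
    exact fun s hs => H (sizeOf s) s rfl hs

theorem snbeta_typable {t : Term} (h : SNbeta t) : Typable t :=
  sn_typable_aux t h t (Sub.refl t)

end SNproof

/-- A term is β-strongly-normalizing iff it is typable in system D. -/
theorem snBeta_iff_typable (t : Term) : SNbeta t ↔ Typable t :=
  ⟨SNproof.snbeta_typable, SNproof.typable_snbeta⟩
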